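/- For all n ≥ 1, 2·Σ_{j=0}^{n−1} Σ_{i=0}^{j−1} C(i)·C(j)·(n−j−1) + Σ_{j=0}^{n−1} C(j)^2·(n−j−1) = (4^{n−1} − 1)/3, where C(0) = 1 and C(k) = 2^{k−1} for k ≥ 1. -/

import Mathlib

/-- `C(0) = 1` and `C(k) = 2^(k-1)` for `k ≥ 1`. -/
def C : ℕ → ℤ := fun k => if k = 0 then 1 else 2 ^ (k - 1)

lemma sq_sum_aux (a : ℕ → ℤ) (n : ℕ) :
    (∑ j ∈ Finset.range n, a j) ^ 2 =
      2 * ∑ j ∈ Finset.range n, ∑ i ∈ Finset.range j, a i * a j +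
        ∑ j ∈ Finset.range n, (a j) ^ 2 := by
  induction n with
  | zero => simp
  | succ n ih =>
    rw [Finset.sum_range_succ, Finset.sum_range_succ (f := fun j => ∑ i ∈ Finset.range j, a i * a j),
      Finset.sum_range_succ (f := fun j => (a j) ^ 2), ← Finset.sum_mul]
    linear_combination ih

lemma sumC (n : ℕ) : ∑ j ∈ Finset.range (n + 1), C j = 2 ^ n := by
  induction n with
  | zero => simp [C]
  | succ n ih =>
    rw [Finset.sum_range_succ, ih]
    have : C (n + 1) = 2 ^ n := by simp [C]
    rw [this]; ring

lemma shift (f : ℕ → ℤ) (n : ℕ) :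
    ∑ j ∈ Finset.range (n + 1), f j * (((n : ℤ) + 1) - j - 1) =
      ∑ j ∈ Finset.range n, f j * ((n : ℤ) - j - 1) + ∑ j ∈ Finset.range n, f j := by
  rw [Finset.sum_range_succ]
  have h1 : f n * (((n : ℤ) + 1) - n - 1) = 0 := by ring
  rw [h1, add_zero, ← Finset.sum_add_distrib]
  apply Finset.sum_congr rfl
  intro j _; ring

lemma key (n : ℕ) :
    3 * (2 * (∑ j ∈ Finset.range (n + 1), ∑ i ∈ Finset.range j,
          C i * C j * (((n : ℤ) + 1) - j - 1)) +
        ∑ j ∈ Finset.range (n + 1), (C j) ^ 2 * (((n : ℤ) + 1) - j - 1)) =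
      4 ^ n - 1 := by
  induction n with
  | zero => simp
  | succ n ih =>
    have hinner : ∀ m : ℕ, ∀ x : ℤ, ∀ j : ℕ,
        (∑ i ∈ Finset.range j, C i * C j * x) = (∑ i ∈ Finset.range j, C i * C j) * x := by
      intro m x j; rw [Finset.sum_mul]
    have rw1 : ∀ m : ℕ,
        (∑ j ∈ Finset.range m, ∑ i ∈ Finset.range j, C i * C j * (((m : ℤ)) - j - 1)) =
          ∑ j ∈ Finset.range m, (∑ i ∈ Finset.range j, C i * C j) * (((m : ℤ)) - j - 1) := by
      intro m
      apply Finset.sum_congr rfl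
      intro j _; rw [Finset.sum_mul]
    -- rewrite LHS with n+2 = (n+1)+1
    have hcast : ((n : ℤ) + 1 + 1) = ((n + 1 : ℕ) : ℤ) + 1 := by push_cast; ring
    have e1 : (∑ j ∈ Finset.range (n + 2), ∑ i ∈ Finset.range j,
          C i * C j * (((n : ℤ) + 1 + 1) - j - 1)) =
        ∑ j ∈ Finset.range (n + 1), (∑ i ∈ Finset.range j, C i * C j) * (((n : ℤ) + 1) - j - 1) +
          ∑ j ∈ Finset.range (n + 1), (∑ i ∈ Finset.range j, C i * C j) := by
      rw [show n + 2 = (n + 1) + 1 from rfl]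
      have := shift (fun j => ∑ i ∈ Finset.range j, C i * C j) (n + 1)
      push_cast at this ⊢
      rw [← this]
      apply Finset.sum_congr rfl
      intro j _; rw [Finset.sum_mul]
    have e2 : (∑ j ∈ Finset.range (n + 2), (C j) ^ 2 * (((n : ℤ) + 1 + 1) - j - 1)) =
        ∑ j ∈ Finset.range (n + 1), (C j) ^ 2 * (((n : ℤ) + 1) - j - 1) +
          ∑ j ∈ Finset.range (n + 1), (C j) ^ 2 := by
      rw [show n + 2 = (n + 1) + 1 from rfl]
      have := shift (fun j => (C j) ^ 2) (n + 1)
      push_cast at this ⊢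
      rw [← this]
    push_cast
    rw [e1, e2]
    have rw1' := rw1 (n + 1)
    push_cast at rw1'
    rw [rw1'] at ih
    have hsq := sq_sum_aux C (n + 1)
    rw [sumC n] at hsq
    have h4 : (2 : ℤ) ^ n * 2 ^ n = 4 ^ n := by
      rw [← mul_pow]; norm_num
    have : (2 : ℤ) * ∑ j ∈ Finset.range (n + 1), ∑ i ∈ Finset.range j, C i * C j +
        ∑ j ∈ Finset.range (n + 1), (C j) ^ 2 = 4 ^ n := by
      rw [← hsq, ← h4]; ring
    have e3 : (∑ j ∈ Finset.range (n + 1), ∑ i ∈ Finset.range j, C i * C j) =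
        ∑ j ∈ Finset.range (n + 1), (∑ i ∈ Finset.range j, C i * C j) := rfl
    rw [e3] at this
    have h4s : (4 : ℤ) ^ (n + 1) = 4 * 4 ^ n := by ring
    rw [h4s]
    linarith [ih, this]

theorem hardin_path_sum (n : ℕ) (hn : 1 ≤ n) :
    2 * (∑ j ∈ Finset.range n, ∑ i ∈ Finset.range j, C i * C j * ((n : ℤ) - j - 1)) +
        (∑ j ∈ Finset.range n, (C j) ^ 2 * ((n : ℤ) - j - 1)) =
      (4 ^ (n - 1) - 1) / 3 := by
  obtain ⟨m, rfl⟩ := Nat.exists_eq_add_of_le hn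
  simp only [Nat.add_sub_cancel_left] at *
  have h := key m
  have hc : ((1 + m : ℕ) : ℤ) = (m : ℤ) + 1 := by push_cast; ring
  rw [show 1 + m = m + 1 by ring] at *
  rw [show ((m + 1 : ℕ) : ℤ) = (m : ℤ) + 1 by push_cast; ring]
  have hm : (1 + m) - 1 = m := by omega
  set L := 2 * (∑ j ∈ Finset.range (m + 1), ∑ i ∈ Finset.range j,
      C i * C j * (((m : ℤ) + 1) - j - 1)) +
    ∑ j ∈ Finset.range (m + 1), (C j) ^ 2 * (((m : ℤ) + 1) - j - 1) with hL
  have h3 : 3 * L = 4 ^ m - 1 := h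
  omega
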